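/- Let f be a Boolean function, ℓ∈{0,1}, and g a goal function for f. If there is a minimal certificate of f setting x_i = ℓ, then g(x_i=ℓ) − g(*,...,*) ≥ 1, where g(x_i=ℓ) denotes the value of g on the partial assignment setting only x_i to ℓ. -/

import Mathlib

attribute [local instance] Classical.propDecidable

/-- `b'` extends the partial assignment `b`: it agrees on all non-`*` coordinates of `b`. -/
def Extends {n : ℕ} (b' b : Fin n → Option Bool) : Prop :=
  ∀ i v, b i = some v → b' i = some v

/-- A total assignment `x` extends the partial assignment `b`. -/
def TExtends {n : ℕ} (x : Fin n → Bool) (b : Fin n → Option Bool) : Prop :=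
  ∀ i v, b i = some v → x i = v

/-- `b` is a certificate of `f`: `f` is constant on all total extensions of `b`. -/
def IsCert {n : ℕ} (f : (Fin n → Bool) → Bool) (b : Fin n → Option Bool) : Prop :=
  ∀ x y, TExtends x b → TExtends y b → f x = f y

/-- `b` is a `k`-certificate of `f`: it forces `f` to the value `k`. -/
def IsKCert {n : ℕ} (f : (Fin n → Bool) → Bool) (k : Bool) (b : Fin n → Option Bool) : Prop :=
  ∀ x, TExtends x b → f x = k

/-- A certificate is minimal if no proper restriction of it is a certificate. -/
def MinCert {n : ℕ} (f : (Fin n → Bool) → Bool) (c : Fin n → Option Bool) : Prop :=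
  IsCert f c ∧ ∀ c', Extends c c' → c' ≠ c → ¬ IsCert f c'

/-- A `k`-certificate is minimal if no proper restriction of it is a `k`-certificate. -/
def MinKCert {n : ℕ} (f : (Fin n → Bool) → Bool) (k : Bool) (c : Fin n → Option Bool) : Prop :=
  IsKCert f k c ∧ ∀ c', Extends c c' → c' ≠ c → ¬ IsKCert f k c'

/-- Monotone utility function: filling in `*`'s never decreases the value. -/
def Mono {n : ℕ} (g : (Fin n → Option Bool) → ℕ) : Prop :=
  ∀ b b', Extends b' b → g b ≤ g b'

/-- Submodular utility function: marginal gains shrink under extension. -/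
def Submod {n : ℕ} (g : (Fin n → Option Bool) → ℕ) : Prop :=
  ∀ b b' (i : Fin n) (ℓ : Bool), Extends b' b → b i = none → b' i = none →
    g (Function.update b' i (some ℓ)) + g b ≤ g (Function.update b i (some ℓ)) + g b'

/-- `g` is a goal function for `f` with goal value `Q`. -/
def GoalFn {n : ℕ} (f : (Fin n → Bool) → Bool) (g : (Fin n → Option Bool) → ℕ)
    (Q : ℕ) : Prop :=
  Mono g ∧ Submod g ∧ ∀ b, g b = Q ↔ IsCert f b

/-- `g` is a `k`-goal function for `f` with goal value `Q`. -/
def KGoalFn {n : ℕ} (f : (Fin n → Bool) → Bool) (k : Bool)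
    (g : (Fin n → Option Bool) → ℕ) (Q : ℕ) : Prop :=
  Mono g ∧ Submod g ∧ (∀ b, IsKCert f k b → g b = Q) ∧ (∀ b, ¬ IsKCert f k b → g b < Q)

/-- The goal value `Γ(f)`: the minimum goal value of any goal function for `f`. -/
noncomputable def gamma {n : ℕ} (f : (Fin n → Bool) → Bool) : ℕ :=
  sInf {Q | ∃ g, GoalFn f g Q}

/-- The `k`-goal value `Γ^k(f)`. -/
noncomputable def gammaK {n : ℕ} (f : (Fin n → Bool) → Bool) (k : Bool) : ℕ :=
  sInf {Q | ∃ g, KGoalFn f k g Q}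

/-- The weight of a partial assignment: the number of non-`*` coordinates. -/
noncomputable def wt {n : ℕ} (b : Fin n → Option Bool) : ℕ :=
  (Finset.univ.filter (fun i => (b i).isSome)).card

/-- `f` depends on its `i`-th variable. -/
def DependsOnVar {n : ℕ} (f : (Fin n → Bool) → Bool) (i : Fin n) : Prop :=
  ∃ x, f (Function.update x i true) ≠ f (Function.update x i false)

/-- if some minimal certificate of `f` sets `x i = ℓ`, then any goal
function for `f` satisfies `g(x i = ℓ) − g(*,…,*) ≥ 1`. -/
theorem stmt2 {n : ℕ} (f : (Fin n → Bool) → Bool) (g : (Fin n → Option Bool) → ℕ) (Q : ℕ)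
    (hg : GoalFn f g Q) (i : Fin n) (ℓ : Bool) (c : Fin n → Option Bool)
    (hc : MinCert f c) (hi : c i = some ℓ) :
    g (fun _ => none) + 1 ≤ g (fun j => if j = i then some ℓ else none) := by
  obtain ⟨hmono, hsub, hiff⟩ := hg
  obtain ⟨hcert, hmin⟩ := hc
  set c' := Function.update c i none with hc'def
  have hext : Extends c c' := by
    intro j v hv
    by_cases hj : j = i
    · subst hj; simp [hc'def, Function.update_self] at hv
    · simpa [hc'def, Function.update_of_ne hj] using hv
  have hne : c' ≠ c := by
    intro h
    have := congrFun h i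
    simp [hc'def, hi] at this
  have hnc : ¬ IsCert f c' := hmin c' hext hne
  have hgcQ : g c = Q := (hiff c).mpr hcert
  have hlt : g c' < Q := by
    have hle : g c' ≤ g c := hmono c' c hext
    have : g c' ≠ Q := fun h => hnc ((hiff c').mp h)
    omega
  have hupd1 : Function.update c' i (some ℓ) = c := by
    funext j
    by_cases hj : j = i
    · subst hj; simp [hc'def, hi]
    · simp [hc'def, Function.update_of_ne hj]
  have hupd2 : Function.update (fun _ : Fin n => none) i (some ℓ)
      = (fun j => if j = i then some ℓ else none) := by
    funext j
    by_cases hj : j = i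
    · subst hj; simp
    · simp [Function.update_of_ne hj, hj]
  have hextc' : Extends c' (fun _ => none) := by intro j v hv; simp at hv
  have hkey := hsub (fun _ => none) c' i ℓ hextc' rfl (by simp [hc'def])
  rw [hupd1, hupd2] at hkey
  omega
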